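/- Let β, γ be distinct positive roots in a finite root system Φ. Then {β, γ} is an antichain in the root order on Φ⁺ if and only if there exists a point v in the open dominant chamber C with (v, β) = (v, γ) = 1. -/

import Mathlib

open RealInnerProductSpace

variable {V : Type*} [NormedAddCommGroup V] [InnerProductSpace ℝ V]

/-- The root order: `β ≤ γ` iff `γ - β` is a nonnegative real combination of simple roots. -/
def rle {n : ℕ} (α : Fin n → V) (β γ : V) : Prop :=
  ∃ c : Fin n → ℝ, (∀ i, 0 ≤ c i) ∧ γ - β = ∑ i, c i • α i

/-- The open dominant chamber. -/
def chamber {n : ℕ} (α : Fin n → V) : Set V :=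
  {v | ∀ i, 0 < ⟪v, α i⟫}

/-- Antichain in the root order: pairwise incomparable. -/
def RootAntichain {n : ℕ} (α : Fin n → V) (Λ : Set V) : Prop :=
  ∀ β ∈ Λ, ∀ γ ∈ Λ, (rle α β γ ∨ rle α γ β) → β = γ

/-- Increasing set (dual order ideal) in the positive root poset. -/
def IncreasingIn {n : ℕ} (α : Fin n → V) (Φpos I : Set V) : Prop :=
  ∀ β ∈ I, ∀ γ ∈ Φpos, rle α β γ → γ ∈ I

/-- Minimal elements of a set in the root order. -/
def rminimals {n : ℕ} (α : Fin n → V) (I : Set V) : Set V :=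
  {β ∈ I | ∀ γ ∈ I, rle α γ β → γ = β}

/-- Maximal elements of a set in the root order. -/
def rmaximals {n : ℕ} (α : Fin n → V) (S : Set V) : Set V :=
  {β ∈ S | ∀ γ ∈ S, rle α β γ → γ = β}

/-- The region `R_I` determined by an increasing set `I`. -/
def regionOf {n : ℕ} (α : Fin n → V) (Φpos I : Set V) : Set V :=
  {v ∈ chamber α | (∀ β ∈ I, 1 < ⟪v, β⟫) ∧ ∀ γ ∈ Φpos \ I, ⟪v, γ⟫ < 1}

/-- The union of the hyperplanes of the Catalan arrangement. -/
def catHyperplanes (Φpos : Set V) : Set V :=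
  ⋃ β ∈ Φpos, {v : V | ⟪v, β⟫ = -1 ∨ ⟪v, β⟫ = 0 ∨ ⟪v, β⟫ = 1}

lemma exists_dual_vec [FiniteDimensional ℝ V] {n : ℕ} (α : Fin n → V)
    (hind : LinearIndependent ℝ α)
    (hspan : Submodule.span ℝ (Set.range α) = ⊤) (x : Fin n → ℝ) :
    ∃ v : V, ∀ i, ⟪v, α i⟫ = x i := by
  let B : Module.Basis (Fin n) ℝ V := Module.Basis.mk hind hspan.ge
  let f : V →ₗ[ℝ] ℝ := ∑ i, x i • (B.coord i : V →ₗ[ℝ] ℝ)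
  refine ⟨(InnerProductSpace.toDual ℝ V).symm (LinearMap.toContinuousLinearMap f), fun i => ?_⟩
  rw [InnerProductSpace.toDual_symm_apply]
  show f (α i) = x i
  have hα : α i = B i := (Module.Basis.mk_apply hind hspan.ge i).symm
  simp [f, hα, Module.Basis.coord_apply, Module.Basis.repr_self, Finsupp.single_apply]

theorem stmt10 [FiniteDimensional ℝ V] {n : ℕ} (α : Fin n → V)
    (hind : LinearIndependent ℝ α)
    (hspan : Submodule.span ℝ (Set.range α) = ⊤)
    (Φpos : Set V)
    (hcone : ∀ β ∈ Φpos, ∃ c : Fin n → ℝ, (∀ i, 0 ≤ c i) ∧ β = ∑ i, c i • α i)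
    (h0 : ∀ β ∈ Φpos, β ≠ 0)
    (β γ : V) (hβ : β ∈ Φpos) (hγ : γ ∈ Φpos) (hne : β ≠ γ) :
    RootAntichain α {β, γ} ↔
      ∃ v ∈ chamber α, ⟪v, β⟫ = 1 ∧ ⟪v, γ⟫ = 1 := by
  constructor
  · intro hA
    obtain ⟨b, hb0, hbeq⟩ := hcone β hβ
    obtain ⟨c, hc0, hceq⟩ := hcone γ hγ
    have hdβγ : γ - β = ∑ k, (c k - b k) • α k := by
      rw [hbeq, hceq, ← Finset.sum_sub_distrib]
      simp [sub_smul]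
    have hdγβ : β - γ = ∑ k, (b k - c k) • α k := by
      rw [hbeq, hceq, ← Finset.sum_sub_distrib]
      simp [sub_smul]
    have h1 : ¬ rle α β γ := fun h =>
      hne (hA β (Set.mem_insert _ _) γ (Set.mem_insert_of_mem _ rfl) (Or.inl h))
    have h2 : ¬ rle α γ β := fun h =>
      hne (hA β (Set.mem_insert _ _) γ (Set.mem_insert_of_mem _ rfl) (Or.inr h))
    obtain ⟨i, hi⟩ : ∃ i, c i < b i := by
      by_contra h
      push_neg at h
      exact h1 ⟨fun k => c k - b k, fun k => sub_nonneg.2 (h k), hdβγ⟩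
    obtain ⟨j, hj⟩ : ∃ j, b j < c j := by
      by_contra h
      push_neg at h
      exact h2 ⟨fun k => b k - c k, fun k => sub_nonneg.2 (h k), hdγβ⟩
    have hij : i ≠ j := fun h => by rw [h] at hi; linarith
    set d : Fin n → ℝ := fun k => b k - c k with hd
    have hdi : 0 < d i := sub_pos.2 hi
    have hdj : d j < 0 := sub_neg.2 hj
    set D : ℝ := ∑ k, d k with hD
    set s : ℝ := max 0 (-D) / d i with hs
    set t : ℝ := max 0 D / (-(d j)) with ht
    have hs0 : 0 ≤ s := div_nonneg (le_max_left _ _) hdi.le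
    have ht0 : 0 ≤ t := div_nonneg (le_max_left _ _) (by linarith)
    set x : Fin n → ℝ := fun k =>
      1 + (if k = i then s else 0) + (if k = j then t else 0) with hxdef
    have hx : ∀ k, 0 < x k := by
      intro k
      have h1 : (0:ℝ) ≤ if k = i then s else 0 := by split <;> simp [hs0]
      have h2 : (0:ℝ) ≤ if k = j then t else 0 := by split <;> simp [ht0]
      simp only [hxdef]
      linarith
    have hsum : ∑ k, d k * x k = 0 := by
      have hdis : d i * s = max 0 (-D) := mul_div_cancel₀ _ hdi.ne'
      have hdjt : d j * t = -(max 0 D) := by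
        rw [ht, div_neg, mul_neg, mul_div_cancel₀ _ hdj.ne]
      have hmax : max 0 (-D) - max 0 D = -D := by
        rcases le_total 0 D with h | h
        · rw [max_eq_left (by linarith), max_eq_right h]; ring
        · rw [max_eq_right (by linarith), max_eq_left h]; ring
      have : ∑ k, d k * x k = D + d i * s + d j * t := by
        simp only [hxdef, mul_add, mul_one, Finset.sum_add_distrib, mul_ite, mul_zero,
          Finset.sum_ite_eq', Finset.mem_univ, if_true, hD]
      rw [this, hdis, hdjt]
      linarith
    have hbc : ∑ k, b k * x k = ∑ k, c k * x k := by
      have : ∑ k, b k * x k - ∑ k, c k * x k = ∑ k, d k * x k := by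
        rw [← Finset.sum_sub_distrib]
        simp [hd, sub_mul]
      linarith
    set S : ℝ := ∑ k, b k * x k with hSdef
    have hS : 0 < S := by
      refine Finset.sum_pos' (fun k _ => mul_nonneg (hb0 k) (hx k).le)
        ⟨i, Finset.mem_univ i, mul_pos (lt_of_le_of_lt (hc0 i) hi) (hx i)⟩
    obtain ⟨v, hv⟩ := exists_dual_vec α hind hspan (fun k => x k / S)
    refine ⟨v, fun k => by rw [hv k]; exact div_pos (hx k) hS, ?_, ?_⟩
    · rw [hbeq, inner_sum]
      simp only [real_inner_smul_right, hv]
      rw [show ∑ k, b k * (x k / S) = (∑ k, b k * x k) / S by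
        rw [Finset.sum_div]; exact Finset.sum_congr rfl fun k _ => (mul_div_assoc _ _ _).symm]
      exact div_self hS.ne'
    · rw [hceq, inner_sum]
      simp only [real_inner_smul_right, hv]
      rw [show ∑ k, c k * (x k / S) = (∑ k, c k * x k) / S by
        rw [Finset.sum_div]; exact Finset.sum_congr rfl fun k _ => (mul_div_assoc _ _ _).symm]
      rw [← hbc]
      exact div_self hS.ne'
  · rintro ⟨v, hv, hvβ, hvγ⟩
    have key : ∀ a b : V, ⟪v, a⟫ = 1 → ⟪v, b⟫ = 1 → rle α a b → a = b := by
      rintro a b ha hb ⟨e, he0, heq⟩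
      have h1 : ∑ k, e k * ⟪v, α k⟫ = 0 := by
        have : ⟪v, b - a⟫ = 0 := by rw [inner_sub_right, ha, hb]; ring
        rw [heq, inner_sum] at this
        simpa [real_inner_smul_right] using this
      have h2 : ∀ k ∈ Finset.univ, e k * ⟪v, α k⟫ = 0 :=
        (Finset.sum_eq_zero_iff_of_nonneg
          (fun k _ => mul_nonneg (he0 k) (hv k).le)).mp h1
      have h3 : b - a = 0 := by
        rw [heq]
        refine Finset.sum_eq_zero fun k _ => ?_
        have := h2 k (Finset.mem_univ k)
        have hek : e k = 0 := by
          by_contra h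
          exact h ((mul_eq_zero.mp this).resolve_right (hv k).ne')
        simp [hek]
      have := sub_eq_zero.mp h3
      exact this.symm
    rintro a (rfl | ha) c (rfl | hc) h
    · rfl
    · rw [Set.mem_singleton_iff] at hc; subst hc
      rcases h with h | h
      · exact key _ _ hvβ hvγ h
      · exact (key _ _ hvγ hvβ h).symm
    · rw [Set.mem_singleton_iff] at ha; subst ha
      rcases h with h | h
      · exact key _ _ hvγ hvβ h
      · exact (key _ _ hvβ hvγ h).symm
    · rw [Set.mem_singleton_iff] at ha hc; rw [ha, hc]
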